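/- Consider the warped product metric g = dr² + F'(r)² ḡ on ℝ × N² over a 2-dimensional fiber (N², ḡ), where F is smooth with F' > 0. Suppose g satisfies the gradient Yamabe soliton equation, i.e. F'' = R − ρ for a constant ρ, where R is the scalar curvature of g. Then the scalar curvature R̄ of (N², ḡ) is constant; hence N² has constant Gauss curvature. -/

import Mathlib

/-- A three-dimensional gradient Yamabe soliton structure on the warped product
`g = dr² + F'(r)² ḡ` over a two-dimensional fiber `(N², ḡ)`: the scalar
curvature of `g` is `R = (F')⁻² R̄ − 2(F''/F')² − 4 F'''/F'`, and the soliton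
equation reduces to `F'' = R − ρ`.  Then the fiber scalar curvature `R̄` is
constant, i.e. `N²` has constant Gauss curvature. -/
theorem stmt_18 {N : Type*}
    (F : ℝ → ℝ) (hF : ContDiff ℝ 2 F)
    (hF''' : ∀ r : ℝ, DifferentiableAt ℝ (deriv (deriv F)) r)
    (hF' : ∀ r : ℝ, 0 < deriv F r)
    (ρ : ℝ) (Rbar : N → ℝ) (R : ℝ × N → ℝ)
    (hR : ∀ r x, R (r, x)
      = (deriv F r) ^ (-2 : ℤ) * Rbar x
        - 2 * (deriv (deriv F) r / deriv F r) ^ 2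
        - 4 * (deriv (deriv (deriv F)) r / deriv F r))
    (hsoliton : ∀ r x, deriv (deriv F) r = R (r, x) - ρ) :
    ∃ c, ∀ x, Rbar x = c := by
  set a := deriv F 0 with ha
  have hpos : 0 < a := hF' 0
  refine ⟨a ^ 2 * (deriv (deriv F) 0 + ρ
      + 2 * (deriv (deriv F) 0 / a) ^ 2
      + 4 * (deriv (deriv (deriv F)) 0 / a)), fun x => ?_⟩
  have h1 := hsoliton 0 x
  have h2 := hR 0 x
  rw [h2] at h1
  have hz : a ^ (-2 : ℤ) = (a ^ 2)⁻¹ := by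
    rw [zpow_neg, zpow_two]; ring_nf
  rw [← ha, hz] at h1
  have hne : a ^ 2 ≠ 0 := by positivity
  have hane : a ≠ 0 := hpos.ne'
  field_simp at h1 ⊢
  linear_combination (-1:ℝ)*h1
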